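/- Suppose all c_i are pairwise distinct and c_{σ(1)} < 0. Then any solution x̂ of (P) satisfies x̂_{σ(1)} = min{u_{σ(1)}, m − M₁}, where M₁ := max{0, max_{i<σ(1)} a_i} and m := min_{i≥σ(1)} b_i. -/

import Mathlib

open Finset

/-- Feasible point of the storage linear program (P). -/
def feasible (n : ℕ) (a b u x : Fin n → ℝ) : Prop :=
  (∀ i, 0 ≤ x i ∧ x i ≤ u i) ∧
  ∀ i, a i ≤ ∑ j ∈ Finset.Iic i, x j ∧ ∑ j ∈ Finset.Iic i, x j ≤ b i

/-- Solution (minimizer) of the storage linear program (P) with costs `c`. -/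
def isSolution (n : ℕ) (a b c u x : Fin n → ℝ) : Prop :=
  feasible n a b u x ∧
  ∀ y, feasible n a b u y → ∑ i, c i * x i ≤ ∑ i, c i * y i

private lemma sum_Iic_update {n : ℕ} (x : Fin n → ℝ) (k i : Fin n) (v : ℝ) :
    ∑ j ∈ Finset.Iic i, Function.update x k v j
      = (∑ j ∈ Finset.Iic i, x j) + (if k ≤ i then v - x k else 0) := by
  by_cases h : k ≤ i
  · rw [if_pos h, Finset.sum_update_of_mem (Finset.mem_Iic.mpr h) x v,
      Finset.sum_sdiff_eq_sub (Finset.singleton_subset_iff.mpr (Finset.mem_Iic.mpr h))]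
    simp
    ring
  · rw [if_neg h, Finset.sum_update_of_notMem (fun hc => h (Finset.mem_Iic.mp hc)) x v,
      add_zero]

private lemma cost_update {n : ℕ} (c x : Fin n → ℝ) (k : Fin n) (v : ℝ) :
    ∑ i, c i * Function.update x k v i = (∑ i, c i * x i) + c k * (v - x k) := by
  have h : ∀ i ∈ Finset.univ, c i * Function.update x k v i
      = Function.update (fun i => c i * x i) k (c k * v) i := by
    intro i _
    rcases eq_or_ne i k with rfl | h
    · simp
    · simp [Function.update_of_ne h]
  rw [Finset.sum_congr rfl h,
    Finset.sum_update_of_mem (Finset.mem_univ k) (fun i => c i * x i) (c k * v),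
    Finset.sum_sdiff_eq_sub (Finset.singleton_subset_iff.mpr (Finset.mem_univ k))]
  simp
  ring

private lemma sum_Iic_update2 {n : ℕ} (x : Fin n → ℝ) (k j : Fin n) (hjk : j ≠ k)
    (ε : ℝ) (i : Fin n) :
    ∑ p ∈ Finset.Iic i,
        Function.update (Function.update x k (x k + ε)) j (x j - ε) p
      = (∑ p ∈ Finset.Iic i, x p) + (if k ≤ i then ε else 0)
        + (if j ≤ i then -ε else 0) := by
  rw [sum_Iic_update, sum_Iic_update, Function.update_of_ne hjk]
  by_cases hki : k ≤ i <;> by_cases hji : j ≤ i <;> simp [hki, hji] <;> ring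

private lemma cost_update2 {n : ℕ} (c x : Fin n → ℝ) (k j : Fin n) (hjk : j ≠ k)
    (ε : ℝ) :
    ∑ i, c i * Function.update (Function.update x k (x k + ε)) j (x j - ε) i
      = (∑ i, c i * x i) + (c k - c j) * ε := by
  rw [cost_update, cost_update, Function.update_of_ne hjk]
  ring

theorem first_entry_formula_neg_cost
    (n : ℕ) (hn : 0 < n) (a b c u : Fin n → ℝ)
    (hu : ∀ i, 0 ≤ u i) (hab : ∀ i, a i ≤ b i)
    (hfeas : ∃ x, feasible n a b u x)
    (hcinj : Function.Injective c)
    (σ : Equiv.Perm (Fin n)) (hσ : StrictMono fun j => c (σ j))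
    (xhat : Fin n → ℝ) (hxhat : isSolution n a b c u xhat)
    (k : Fin n) (hk : k = σ ⟨0, hn⟩) (hck : c k < 0)
    (M₁ m : ℝ)
    (hM₁ : M₁ = (insert (0 : ℝ) ((Finset.Iio k).image a)).max'
      (Finset.insert_nonempty _ _))
    (hm : m = ((Finset.Ici k).image b).min' (Finset.nonempty_Ici.image b)) :
    xhat k = min (u k) (m - M₁) := by
  obtain ⟨⟨hx1, hx2⟩, hopt⟩ := hxhat
  -- partial sums
  set S : Fin n → ℝ := fun i => ∑ j ∈ Finset.Iic i, xhat j with hSdef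
  have hS2 : ∀ i, a i ≤ S i ∧ S i ≤ b i := hx2
  have hmono : ∀ {i i' : Fin n}, i ≤ i' → S i ≤ S i' := by
    intro i i' h
    apply Finset.sum_le_sum_of_subset_of_nonneg (Finset.Iic_subset_Iic.mpr h)
    intro p _ _
    exact (hx1 p).1
  set T : ℝ := ∑ j ∈ Finset.Iio k, xhat j with hTdef
  have hTnonneg : 0 ≤ T := Finset.sum_nonneg fun p _ => (hx1 p).1
  have hSk : S k = T + xhat k := by
    rw [hSdef, hTdef]
    simp only
    rw [← Finset.Iio_insert k, Finset.sum_insert (by simp)]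
    ring
  -- M₁ ≤ T
  have hM1le : M₁ ≤ T := by
    rw [hM₁]
    apply Finset.max'_le
    intro y hy
    rcases Finset.mem_insert.mp hy with rfl | hy
    · exact hTnonneg
    · obtain ⟨i, hi, rfl⟩ := Finset.mem_image.mp hy
      have hik : i < k := Finset.mem_Iio.mp hi
      have hSiT : S i ≤ T := by
        apply Finset.sum_le_sum_of_subset_of_nonneg
        · intro p hp
          exact Finset.mem_Iio.mpr (lt_of_le_of_lt (Finset.mem_Iic.mp hp) hik)
        · intro p _ _
          exact (hx1 p).1
      exact (hS2 i).1.trans hSiT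
  have hM1nonneg : 0 ≤ M₁ := by
    rw [hM₁]
    exact Finset.le_max' _ _ (Finset.mem_insert_self _ _)
  have haM : ∀ i, i < k → a i ≤ M₁ := by
    intro i hi
    rw [hM₁]
    exact Finset.le_max' _ _
      (Finset.mem_insert_of_mem (Finset.mem_image_of_mem a (Finset.mem_Iio.mpr hi)))
  -- S k ≤ m
  have hSkm : S k ≤ m := by
    obtain ⟨i', hi', hbi'⟩ := Finset.mem_image.mp
      (hm ▸ Finset.min'_mem ((Finset.Ici k).image b) (Finset.nonempty_Ici.image b))
    calc S k ≤ S i' := hmono (Finset.mem_Ici.mp hi')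
    _ ≤ b i' := (hS2 i').2
    _ = m := by rw [hbi', hm]
  have hmleb : ∀ i, k ≤ i → m ≤ b i := by
    intro i hi
    rw [hm]
    exact Finset.min'_le _ _ (Finset.mem_image_of_mem b (Finset.mem_Ici.mpr hi))
  -- upper bound
  have hub : xhat k ≤ min (u k) (m - M₁) := by
    apply le_min (hx1 k).2
    linarith
  -- strict minimality of c k
  have hmin : ∀ j : Fin n, j ≠ k → c k < c j := by
    intro j hj
    have hjs : j = σ (σ.symm j) := (σ.apply_symm_apply j).symm
    rw [hjs, hk]
    apply hσ
    have hne : (⟨0, hn⟩ : Fin n) ≠ σ.symm j := by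
      intro h
      apply hj
      rw [hk, h, σ.apply_symm_apply]
    exact lt_of_le_of_ne (Fin.mk_le_mk.mpr (Nat.zero_le _)) hne
  refine le_antisymm hub (le_of_not_gt fun hlt => ?_)
  obtain ⟨hlt1, hlt2⟩ := lt_min_iff.mp hlt
  rcases eq_or_lt_of_le hM1le with hMT | hMT
  · -- T = M₁
    have hSklt : S k < m := by rw [hSk, ← hMT]; linarith
    by_cases hcase : ∀ i, k ≤ i → S i < b i
    · -- Case A: all upper constraints from k on are slack; push x_k up
      set ε₀ : ℝ := ((Finset.Ici k).image (fun i => b i - S i)).min'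
        ((Finset.nonempty_Ici).image _) with hε₀def
      set ε : ℝ := min (u k - xhat k) ε₀ with hεdef
      have hε₀pos : 0 < ε₀ := by
        rw [hε₀def]
        apply (Finset.lt_min'_iff _ _).mpr
        intro y hy
        obtain ⟨i, hi, rfl⟩ := Finset.mem_image.mp hy
        exact sub_pos.mpr (hcase i (Finset.mem_Ici.mp hi))
      have hεpos : 0 < ε := lt_min (sub_pos.mpr hlt1) hε₀pos
      have hεk : ε ≤ u k - xhat k := min_le_left _ _
      have hεslack : ∀ i, k ≤ i → ε ≤ b i - S i := by
        intro i hi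
        refine (min_le_right _ _).trans ?_
        exact Finset.min'_le _ _ (Finset.mem_image_of_mem _ (Finset.mem_Ici.mpr hi))
      set y : Fin n → ℝ := Function.update xhat k (xhat k + ε) with hydef
      have hyS : ∀ i, ∑ p ∈ Finset.Iic i, y p = S i + (if k ≤ i then ε else 0) := by
        intro i
        rw [hydef, sum_Iic_update]
        by_cases hki : k ≤ i <;> simp [hki] <;> rfl
      have hyfeas : feasible n a b u y := by
        constructor
        · intro i
          rcases eq_or_ne i k with rfl | h
          · rw [hydef]
            simp only [Function.update_self]
            constructor <;> [linarith [(hx1 i).1]; linarith]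
          · rw [hydef, Function.update_of_ne h]
            exact hx1 i
        · intro i
          rw [hyS i]
          by_cases hki : k ≤ i
          · rw [if_pos hki]
            have h1 := (hS2 i).1
            have h2 := hεslack i hki
            constructor <;> linarith
          · rw [if_neg hki, add_zero]
            exact hS2 i
      have hle := hopt y hyfeas
      rw [hydef, cost_update] at hle
      have hneg : c k * (xhat k + ε - xhat k) < 0 := by
        have h : xhat k + ε - xhat k = ε := by ring
        rw [h]
        exact mul_neg_of_neg_of_pos hck hεpos
      linarith
    · -- Case B: some upper constraint is tight
      push_neg at hcase
      obtain ⟨iw, hiwk, hiwb⟩ := hcase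
      set F : Finset (Fin n) := (Finset.Ici k).filter (fun i => b i ≤ S i) with hFdef
      have hFne : F.Nonempty :=
        ⟨iw, Finset.mem_filter.mpr ⟨Finset.mem_Ici.mpr hiwk, hiwb⟩⟩
      set i₀ : Fin n := F.min' hFne with hi₀def
      have hi₀mem : i₀ ∈ F := Finset.min'_mem F hFne
      have hki₀ : k ≤ i₀ := Finset.mem_Ici.mp (Finset.mem_filter.mp hi₀mem).1
      have hbi₀ : b i₀ ≤ S i₀ := (Finset.mem_filter.mp hi₀mem).2
      have hstrict : ∀ i, k ≤ i → i < i₀ → S i < b i := by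
        intro i hki hii₀
        by_contra hc
        push_neg at hc
        have : i ∈ F := Finset.mem_filter.mpr ⟨Finset.mem_Ici.mpr hki, hc⟩
        exact absurd (Finset.min'_le F i this) (not_le.mpr hii₀)
      -- find j ∈ (k, i₀] with xhat j > 0
      have hIicsd : Finset.Iic i₀ \ Finset.Iic k = Finset.Ioc k i₀ := by
        ext p
        simp only [Finset.mem_sdiff, Finset.mem_Iic, Finset.mem_Ioc, not_le]
        tauto
      have hsumIoc : ∑ p ∈ Finset.Ioc k i₀, xhat p = S i₀ - S k := by
        rw [← hIicsd]
        exact Finset.sum_sdiff_eq_sub (Finset.Iic_subset_Iic.mpr hki₀)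
      have hsumpos : 0 < ∑ p ∈ Finset.Ioc k i₀, xhat p := by
        rw [hsumIoc]
        have := hmleb i₀ hki₀
        linarith
      have hexj : ∃ j ∈ Finset.Ioc k i₀, 0 < xhat j := by
        by_contra h
        push_neg at h
        exact absurd (Finset.sum_nonpos h) (not_le.mpr hsumpos)
      obtain ⟨j, hjmem, hxjpos⟩ := hexj
      obtain ⟨hkj, hji₀⟩ := Finset.mem_Ioc.mp hjmem
      have hjk : j ≠ k := ne_of_gt hkj
      -- slack on [k, j)
      have hIcone : (Finset.Ico k j).Nonempty := Finset.nonempty_Ico.mpr hkj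
      set ε₀ : ℝ := ((Finset.Ico k j).image (fun i => b i - S i)).min'
        (hIcone.image _) with hε₀def
      set ε : ℝ := min (min (u k - xhat k) (xhat j)) ε₀ with hεdef
      have hε₀pos : 0 < ε₀ := by
        rw [hε₀def]
        apply (Finset.lt_min'_iff _ _).mpr
        intro y hy
        obtain ⟨i, hi, rfl⟩ := Finset.mem_image.mp hy
        obtain ⟨hki, hij⟩ := Finset.mem_Ico.mp hi
        exact sub_pos.mpr (hstrict i hki (lt_of_lt_of_le hij hji₀))
      have hεpos : 0 < ε :=
        lt_min (lt_min (sub_pos.mpr hlt1) hxjpos) hε₀pos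
      have hεk : ε ≤ u k - xhat k := (min_le_left _ _).trans (min_le_left _ _)
      have hεj : ε ≤ xhat j := (min_le_left _ _).trans (min_le_right _ _)
      have hεslack : ∀ i, k ≤ i → i < j → ε ≤ b i - S i := by
        intro i hki hij
        refine (min_le_right _ _).trans ?_
        exact Finset.min'_le _ _
          (Finset.mem_image_of_mem _ (Finset.mem_Ico.mpr ⟨hki, hij⟩))
      set y : Fin n → ℝ :=
        Function.update (Function.update xhat k (xhat k + ε)) j (xhat j - ε) with hydef
      have hyS : ∀ i, ∑ p ∈ Finset.Iic i, y p
          = S i + (if k ≤ i then ε else 0) + (if j ≤ i then -ε else 0) := by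
        intro i
        rw [hydef]
        exact sum_Iic_update2 xhat k j hjk ε i
      have hyfeas : feasible n a b u y := by
        constructor
        · intro i
          rcases eq_or_ne i j with rfl | hij
          · rw [hydef]
            simp only [Function.update_self]
            constructor <;> [linarith; linarith [(hx1 i).2]]
          · rcases eq_or_ne i k with rfl | hik
            · rw [hydef, Function.update_of_ne (Ne.symm hjk)]
              simp only [Function.update_self]
              constructor <;> [linarith [(hx1 i).1]; linarith]
            · rw [hydef, Function.update_of_ne hij, Function.update_of_ne hik]
              exact hx1 i
        · intro i
          rw [hyS i]
          by_cases hji : j ≤ i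
          · have hki : k ≤ i := le_of_lt (lt_of_lt_of_le hkj hji)
            rw [if_pos hki, if_pos hji]
            have h1 := (hS2 i).1
            have h2 := (hS2 i).2
            constructor <;> linarith
          · rw [if_neg hji, add_zero]
            by_cases hki : k ≤ i
            · rw [if_pos hki]
              have hslack := hεslack i hki (not_le.mp hji)
              have h1 := (hS2 i).1
              constructor <;> linarith
            · rw [if_neg hki, add_zero]
              exact hS2 i
      have hle := hopt y hyfeas
      rw [hydef, cost_update2 c xhat k j hjk ε] at hle
      have hneg : (c k - c j) * ε < 0 :=
        mul_neg_of_neg_of_pos (sub_neg.mpr (hmin j hjk)) hεpos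
      linarith
  · -- M₁ < T : move mass from the last positive entry before k onto x_k
    have hTpos : 0 < T := lt_of_le_of_lt hM1nonneg hMT
    have hGne : ((Finset.Iio k).filter (fun p => 0 < xhat p)).Nonempty := by
      by_contra h
      rw [Finset.not_nonempty_iff_eq_empty, Finset.filter_eq_empty_iff] at h
      have : T ≤ 0 := Finset.sum_nonpos fun p hp => not_lt.mp (h hp)
      linarith
    set G := (Finset.Iio k).filter (fun p => 0 < xhat p) with hGdef
    set j : Fin n := G.max' hGne with hjdef
    have hjmem : j ∈ G := Finset.max'_mem G hGne
    have hjlt : j < k := Finset.mem_Iio.mp (Finset.mem_filter.mp hjmem).1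
    have hxjpos : 0 < xhat j := (Finset.mem_filter.mp hjmem).2
    have hjk : j ≠ k := ne_of_lt hjlt
    have hjtop : ∀ p, j < p → p < k → xhat p = 0 := by
      intro p hjp hpk
      by_contra h
      have hppos : 0 < xhat p := lt_of_le_of_ne (hx1 p).1 (Ne.symm h)
      have hpG : p ∈ G := Finset.mem_filter.mpr ⟨Finset.mem_Iio.mpr hpk, hppos⟩
      exact absurd (Finset.le_max' G p hpG) (not_le.mpr hjp)
    have hSiT : ∀ i, j ≤ i → i < k → S i = T := by
      intro i hji hik
      have hsub : Finset.Iic i ⊆ Finset.Iio k := fun p hp =>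
        Finset.mem_Iio.mpr (lt_of_le_of_lt (Finset.mem_Iic.mp hp) hik)
      have hsd : ∑ p ∈ Finset.Iio k \ Finset.Iic i, xhat p = T - S i :=
        Finset.sum_sdiff_eq_sub hsub
      have hzero : ∑ p ∈ Finset.Iio k \ Finset.Iic i, xhat p = 0 := by
        apply Finset.sum_eq_zero
        intro p hp
        obtain ⟨hp1, hp2⟩ := Finset.mem_sdiff.mp hp
        exact hjtop p (lt_of_le_of_lt hji (not_le.mp fun h =>
          hp2 (Finset.mem_Iic.mpr h))) (Finset.mem_Iio.mp hp1)
      linarith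
    set ε : ℝ := min (min (u k - xhat k) (xhat j)) (T - M₁) with hεdef
    have hεpos : 0 < ε :=
      lt_min (lt_min (sub_pos.mpr hlt1) hxjpos) (sub_pos.mpr hMT)
    have hεk : ε ≤ u k - xhat k := (min_le_left _ _).trans (min_le_left _ _)
    have hεj : ε ≤ xhat j := (min_le_left _ _).trans (min_le_right _ _)
    have hεTM : ε ≤ T - M₁ := min_le_right _ _
    set y : Fin n → ℝ :=
      Function.update (Function.update xhat k (xhat k + ε)) j (xhat j - ε) with hydef
    have hyS : ∀ i, ∑ p ∈ Finset.Iic i, y p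
        = S i + (if k ≤ i then ε else 0) + (if j ≤ i then -ε else 0) := by
      intro i
      rw [hydef]
      exact sum_Iic_update2 xhat k j hjk ε i
    have hyfeas : feasible n a b u y := by
      constructor
      · intro i
        rcases eq_or_ne i j with rfl | hij
        · rw [hydef]
          simp only [Function.update_self]
          constructor <;> [linarith; linarith [(hx1 j).2]]
        · rcases eq_or_ne i k with rfl | hik
          · rw [hydef, Function.update_of_ne (Ne.symm hjk)]
            simp only [Function.update_self]
            constructor <;> [linarith [(hx1 i).1]; linarith]
          · rw [hydef, Function.update_of_ne hij, Function.update_of_ne hik]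
            exact hx1 i
      · intro i
        rw [hyS i]
        by_cases hki : k ≤ i
        · have hji : j ≤ i := le_of_lt (lt_of_lt_of_le hjlt hki)
          rw [if_pos hki, if_pos hji]
          have h1 := (hS2 i).1
          have h2 := (hS2 i).2
          constructor <;> linarith
        · rw [if_neg hki, add_zero]
          by_cases hji : j ≤ i
          · rw [if_pos hji]
            have hik : i < k := not_le.mp hki
            have hST := hSiT i hji hik
            have hai := haM i hik
            have h2 := (hS2 i).2
            constructor <;> linarith
          · rw [if_neg hji, add_zero]
            exact hS2 i
    have hle := hopt y hyfeas
    rw [hydef, cost_update2 c xhat k j hjk ε] at hle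
    have hneg : (c k - c j) * ε < 0 :=
      mul_neg_of_neg_of_pos (sub_neg.mpr (hmin j hjk)) hεpos
    linarith
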